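/- Let f : X → ℝ∪{+∞} with Graph(∂f) ≠ ∅. If ∂f is maximal monotone then ∂f = ∂(cl conv f). -/

import Mathlib

open scoped Topology

section Defs

variable {X : Type*} [AddCommGroup X] [Module ℝ X] [TopologicalSpace X]

/-- `p ∈ ∂f(x)`: `f x` is finite and `f y ≥ f x + ⟨y - x, p⟩` for all `y`. -/
def IsSubgrad (f : X → EReal) (x : X) (p : X →L[ℝ] ℝ) : Prop :=
  f x ≠ ⊤ ∧ f x ≠ ⊥ ∧ ∀ y, f x + (p (y - x) : EReal) ≤ f y

/-- Graph of the convex subdifferential of `f`. -/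
def graphSub (f : X → EReal) : Set (X × (X →L[ℝ] ℝ)) :=
  {q | IsSubgrad f q.1 q.2}

/-- Domain `D(∂f)` of the subdifferential. -/
def subdiffDom (f : X → EReal) : Set X := {x | ∃ p, IsSubgrad f x p}

/-- Range `R(∂f)` of the subdifferential. -/
def subdiffRan (f : X → EReal) : Set (X →L[ℝ] ℝ) := {p | ∃ x, IsSubgrad f x p}

/-- Monotone subset of `X × X*`. -/
def MonotoneSet (S : Set (X × (X →L[ℝ] ℝ))) : Prop :=
  ∀ a ∈ S, ∀ b ∈ S, 0 ≤ a.2 (a.1 - b.1) - b.2 (a.1 - b.1)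

/-- Maximal monotone subset of `X × X*` (maximal w.r.t. graph inclusion). -/
def MaxMonotoneSet (S : Set (X × (X →L[ℝ] ℝ))) : Prop :=
  MonotoneSet S ∧ ∀ T, MonotoneSet T → S ⊆ T → T = S

/-- Proper function: never `−∞` and not identically `+∞`. -/
def ProperE {Y : Type*} (f : Y → EReal) : Prop :=
  (∃ x, f x ≠ ⊤) ∧ ∀ x, f x ≠ ⊥

/-- Convexity of an extended-real-valued function via its epigraph. -/
def ConvexEpi (f : X → EReal) : Prop :=
  Convex ℝ {q : X × ℝ | f q.1 ≤ (q.2 : EReal)}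

/-- The lsc convex hull: the greatest lsc convex function majorized by `f`. -/
noncomputable def lscConvHull (f : X → EReal) : X → EReal := fun x =>
  sSup {v | ∃ g : X → EReal, ConvexEpi g ∧ LowerSemicontinuous g ∧ g ≤ f ∧ v = g x}

/-- Convex conjugate w.r.t. the dual system `(X, X*)`. -/
noncomputable def conjE (f : X → EReal) (p : X →L[ℝ] ℝ) : EReal :=
  ⨆ x, ((p x : EReal) - f x)

/-- Biconjugate `f**`. -/
noncomputable def biconjE (f : X → EReal) (x : X) : EReal :=
  ⨆ p : X →L[ℝ] ℝ, ((p x : EReal) - conjE f p)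

/-- Fitzpatrick function of `∂f`. -/
noncomputable def fitzSub (f : X → EReal) (x : X) (p : X →L[ℝ] ℝ) : EReal :=
  ⨆ a, ⨆ s, ⨆ _ : IsSubgrad f a s, ((s (x - a) + p a : ℝ) : EReal)

/-- Upper envelope `f^∪(x) = sup{⟨x−a, a*⟩ + f(a) : (a,a*) ∈ Graph ∂f}`. -/
noncomputable def upperEnv (f : X → EReal) (x : X) : EReal :=
  ⨆ a, ⨆ s, ⨆ _ : IsSubgrad f a s, ((s (x - a) : EReal) + f a)

end Defs

section Aux

variable {X : Type*} [AddCommGroup X] [Module ℝ X] [TopologicalSpace X]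

lemma monotoneSet_graphSub (f : X → EReal) : MonotoneSet (graphSub f) := by
  rintro ⟨a, p⟩ ⟨hat, hab, hap⟩ ⟨b, q⟩ ⟨hbt, hbb, hbq⟩
  obtain ⟨ra, hra⟩ : ∃ r : ℝ, f a = (r : EReal) := ⟨(f a).toReal, (EReal.coe_toReal hat hab).symm⟩
  obtain ⟨rb, hrb⟩ : ∃ r : ℝ, f b = (r : EReal) := ⟨(f b).toReal, (EReal.coe_toReal hbt hbb).symm⟩
  have h1 := hap b
  have h2 := hbq a
  rw [hra, hrb, ← EReal.coe_add, EReal.coe_le_coe_iff] at h1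
  rw [hra, hrb, ← EReal.coe_add, EReal.coe_le_coe_iff] at h2
  have hpb : p (b - a) = - p (a - b) := by
    rw [← map_neg]; congr 1; abel
  simp only
  linarith [h1, h2, hpb]

lemma graphSub_subset_lscConvHull [IsTopologicalAddGroup X] [ContinuousSMul ℝ X]
    (f : X → EReal) : graphSub f ⊆ graphSub (lscConvHull f) := by
  rintro ⟨x, p⟩ ⟨hxt, hxb, hxp⟩
  obtain ⟨r, hr⟩ : ∃ r : ℝ, f x = (r : EReal) := ⟨(f x).toReal, (EReal.coe_toReal hxt hxb).symm⟩
  set h : X → EReal := fun y => ((r + p (y - x) : ℝ) : EReal) with hh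
  have hconv : ConvexEpi h := by
    rintro ⟨y1, v1⟩ hy1 ⟨y2, v2⟩ hy2 s t hs ht hst
    simp only [Set.mem_setOf_eq, hh, EReal.coe_le_coe_iff, Prod.smul_fst, Prod.smul_snd,
      Prod.fst_add, Prod.snd_add, smul_eq_mul] at hy1 hy2 ⊢
    have hk : p (s • y1 + t • y2 - x) = s * p (y1 - x) + t * p (y2 - x) := by
      have hx : s • y1 + t • y2 - x = s • (y1 - x) + t • (y2 - x) := by
        rw [smul_sub, smul_sub]
        nth_rewrite 1 [show x = s • x + t • x by rw [← add_smul, hst, one_smul]]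
        abel
      rw [hx, map_add, map_smul, map_smul]; rfl
    have hrst : r = s * r + t * r := by rw [← add_mul, hst, one_mul]
    rw [hk]
    nlinarith [mul_le_mul_of_nonneg_left hy1 hs, mul_le_mul_of_nonneg_left hy2 ht]
  have hlsc : LowerSemicontinuous h := by
    apply Continuous.lowerSemicontinuous
    exact continuous_coe_real_ereal.comp
      (continuous_const.add (p.continuous.comp (continuous_id.sub continuous_const)))
  have hle : h ≤ f := by
    intro y
    have := hxp y
    rw [hr] at this
    rw [hh]
    simpa [EReal.coe_add] using this
  have hmem : ∀ y, h y ∈ {v | ∃ g : X → EReal, ConvexEpi g ∧ LowerSemicontinuous g ∧ g ≤ f ∧ v = g y} :=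
    fun y => ⟨h, hconv, hlsc, hle, rfl⟩
  have hgle : ∀ y, lscConvHull f y ≤ f y := by
    intro y
    apply sSup_le
    rintro v ⟨g, -, -, hgf, rfl⟩
    exact hgf y
  have hgx : lscConvHull f x = f x := by
    apply le_antisymm (hgle x)
    have := le_sSup (hmem x)
    have hhx : h x = f x := by
      rw [hh, hr]; simp only [sub_self, map_zero, add_zero]
    rwa [hhx] at this
  refine ⟨by rw [hgx]; exact hxt, by rw [hgx]; exact hxb, ?_⟩
  intro y
  rw [hgx, hr]
  calc ((r : EReal) + (p (y - x) : EReal)) = h y := by rw [hh]; simp [EReal.coe_add]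
    _ ≤ lscConvHull f y := le_sSup (hmem y)

end Aux


theorem subdiff_maxMonotone_eq_subdiff_clconv {X : Type*} [AddCommGroup X] [Module ℝ X] [TopologicalSpace X]
    [IsTopologicalAddGroup X] [ContinuousSMul ℝ X] [LocallyConvexSpace ℝ X] [T2Space X]
    (f : X → EReal) (hbot : ∀ x, f x ≠ ⊥) (hne : (graphSub f).Nonempty)
    (hmax : MaxMonotoneSet (graphSub f)) :
    graphSub f = graphSub (lscConvHull f) := by
  have := hmax.2 (graphSub (lscConvHull f)) (monotoneSet_graphSub _)
    (graphSub_subset_lscConvHull f)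
  exact this.symm
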